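/- If A is a dense subring of B and B is a dense subring of C, then A is a dense subring of C. -/
import Mathlib


/-- A subring `A` of `C` is dense if for every ideal `I` of `C` and every
`b ∉ rad I` there exists `a ∉ rad I` with `a * b ∈ A`. -/
def IsDenseSubring {C : Type*} [CommRing C] (A : Subring C) : Prop :=
  ∀ I : Ideal C, ∀ b ∉ I.radical, ∃ a ∉ I.radical, a * b ∈ A

theorem stmt_4 {C : Type*} [CommRing C] (A B : Subring C) (hAB : A ≤ B)
    (hAdenseB : IsDenseSubring (A.comap B.subtype))
    (hBdenseC : IsDenseSubring B) : IsDenseSubring A := by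
  intro I b hb
  -- find a prime P ⊇ I with b ∉ P
  have hb' := hb
  rw [Ideal.radical_eq_sInf, Submodule.mem_sInf] at hb'
  push_neg at hb'
  obtain ⟨P, ⟨hIP, hPprime⟩, hbP⟩ := hb'
  have hradP : Ideal.radical P = P := hPprime.radical
  -- density of B in C at P
  obtain ⟨c, hc, hcb⟩ := hBdenseC P b (by rw [hradP]; exact hbP)
  rw [hradP] at hc
  -- the prime Q = P ∩ B
  set Q : Ideal B := Ideal.comap B.subtype P with hQ
  haveI hQprime : Q.IsPrime := Ideal.comap_isPrime B.subtype P
  have hcbP : c * b ∉ P := fun h => (hPprime.mem_or_mem h).elim hc hbP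
  obtain ⟨a', ha', haA⟩ := hAdenseB Q ⟨c * b, hcb⟩ (by
    rw [hQprime.radical]
    simpa [hQ, Ideal.mem_comap] using hcbP)
  rw [hQprime.radical, hQ, Ideal.mem_comap] at ha'
  -- a' ∈ B, (a' : C) ∉ P
  refine ⟨(a' : C) * c, ?_, ?_⟩
  · intro h
    have hle : I.radical ≤ P := hradP ▸ Ideal.radical_mono hIP
    exact (hPprime.mem_or_mem (hle h)).elim ha' hc
  · have : ((a' * ⟨c * b, hcb⟩ : B) : C) ∈ A := haA
    simpa [mul_assoc] using this
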